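/- Let T > 0, let p > 0 be a real number, let f : ℝ → ℝ be continuous, T-periodic and not identically zero, and let x : ℝ → ℝ be a twice continuously differentiable T-periodic function with x(t) > 0 for all t ∈ ℝ satisfying x(t)^p · x''(t) = f(t) for all t ∈ ℝ. Then ∫₀ᵀ f(t) dt < 0. -/

import Mathlib

open MeasureTheory intervalIntegral

/-- Second necessary condition for positive `T`-periodic solutions of `x^p x'' = f`:
if `f` is continuous, `T`-periodic and not identically zero, then `∫₀ᵀ f < 0`. -/
theorem stmt_5 (T p : ℝ) (hT : 0 < T) (hp : 0 < p)
    (f : ℝ → ℝ) (hf : Continuous f) (hfT : ∀ t : ℝ, f (t + T) = f t)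
    (hfne : ∃ t, f t ≠ 0)
    (x : ℝ → ℝ) (hx : ContDiff ℝ 2 x) (hxT : ∀ t : ℝ, x (t + T) = x t)
    (hxpos : ∀ t : ℝ, 0 < x t)
    (hode : ∀ t : ℝ, (x t) ^ p * deriv (deriv x) t = f t) :
    (∫ t in (0:ℝ)..T, f t) < 0 := by
  have hdx : Differentiable ℝ x := hx.differentiable (by norm_num)
  have hx2 : ContDiff ℝ 1 (deriv x) := by
    have := (contDiff_succ_iff_deriv (n := 1)).mp (by exact_mod_cast hx)
    exact this.2.2
  have hdg : Differentiable ℝ (deriv x) := hx2.differentiable one_ne_zero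
  have hcg : Continuous (deriv x) := hdg.continuous
  -- periodicity of deriv x
  have hgT : ∀ t : ℝ, deriv x (t + T) = deriv x t := by
    intro t
    have h1 : HasDerivAt (fun s => x (s + T)) (deriv x (t + T)) t := by
      have := ((hdx (t + T)).hasDerivAt).comp t ((hasDerivAt_id t).add_const T)
      exact this.congr_deriv (mul_one _)
    have hfun : (fun s => x (s + T)) = x := funext hxT
    rw [hfun] at h1
    rw [← h1.deriv]
  have hgper : Function.Periodic (deriv x) T := hgT
  -- the auxiliary nonnegative integrand
  set h : ℝ → ℝ := fun t => p * x t ^ (p - 1) * (deriv x t) ^ 2 with hh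
  have hch : Continuous h := by
    apply (continuous_const.mul (hx.continuous.rpow_const fun t => Or.inl (hxpos t).ne')).mul
    exact hcg.pow 2
  have hhnn : ∀ t, 0 ≤ h t := fun t =>
    mul_nonneg (mul_nonneg hp.le (Real.rpow_nonneg (hxpos t).le _)) (sq_nonneg _)
  -- integration by parts: derivative of x^p * x'
  have hD : ∀ t : ℝ, HasDerivAt (fun s => x s ^ p * deriv x s) (h t + f t) t := by
    intro t
    have h1 : HasDerivAt (fun s => x s ^ p) (deriv x t * p * x t ^ (p - 1)) t :=
      (hdx t).hasDerivAt.rpow_const (Or.inl (hxpos t).ne')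
    have h2 : HasDerivAt (deriv x) (deriv (deriv x) t) t := (hdg t).hasDerivAt
    have := h1.mul h2
    exact this.congr_deriv (by rw [← hode t, hh]; ring)
  have hint : (∫ t in (0:ℝ)..T, (h t + f t)) = 0 := by
    rw [intervalIntegral.integral_eq_sub_of_hasDerivAt (fun t _ => hD t)
      ((hch.add hf).intervalIntegrable 0 T)]
    have e1 : x T = x 0 := by simpa using hxT 0
    have e2 : deriv x T = deriv x 0 := by simpa using hgT 0
    rw [e1, e2, sub_self]
  have hsplit : (∫ t in (0:ℝ)..T, h t) + (∫ t in (0:ℝ)..T, f t) = 0 := by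
    rw [← intervalIntegral.integral_add (hch.intervalIntegrable 0 T)
      (hf.intervalIntegrable 0 T)]
    exact hint
  -- it suffices that ∫ h > 0
  have hpos : 0 < ∫ t in (0:ℝ)..T, h t := by
    -- there is a point where deriv x ≠ 0
    have hex : ∃ t, deriv x t ≠ 0 := by
      by_contra hc
      push_neg at hc
      have hz : deriv x = fun _ => (0 : ℝ) := funext hc
      obtain ⟨t0, ht0⟩ := hfne
      apply ht0
      rw [← hode t0, hz]
      simp
    obtain ⟨t1, ht1⟩ := hex
    -- shift it into (0, T]
    obtain ⟨s, hs0T, hss⟩ : ∃ s, s ∈ Set.Ioc 0 T ∧ deriv x s ≠ 0 := by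
      set s0 : ℝ := t1 - ⌊t1 / T⌋ * T with hs0
      have hval : deriv x s0 = deriv x t1 := hgper.sub_int_mul_eq ⌊t1 / T⌋
      have hfr : s0 = T * Int.fract (t1 / T) := by
        rw [hs0, Int.fract]
        field_simp
      have hs0mem : s0 ∈ Set.Ico (0 : ℝ) T := by
        rw [hfr]
        refine ⟨mul_nonneg hT.le (Int.fract_nonneg _), ?_⟩
        calc T * Int.fract (t1 / T) < T * 1 :=
              mul_lt_mul_of_pos_left (Int.fract_lt_one _) hT
          _ = T := mul_one T
      rcases eq_or_lt_of_le hs0mem.1 with h0 | h0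
      · refine ⟨T, ⟨hT, le_rfl⟩, ?_⟩
        have e : deriv x T = deriv x s0 := by
          rw [← h0]
          simpa using hgT 0
        rw [e, hval]; exact ht1
      · exact ⟨s0, ⟨h0, hs0mem.2.le⟩, hval ▸ ht1⟩
    have hhs : 0 < h s := by
      have : (0:ℝ) < (deriv x s) ^ 2 := by positivity
      have := mul_pos (mul_pos hp (Real.rpow_pos_of_pos (hxpos s) (p - 1))) this
      simpa [hh] using this
    -- find a small interval around s where h is positive
    obtain ⟨δ, hδ, hball⟩ : ∃ δ > 0, ∀ t, dist t s < δ → 0 < h t := by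
      have hmem : {t : ℝ | 0 < h t} ∈ nhds s :=
        hch.continuousAt.preimage_mem_nhds (Ioi_mem_nhds hhs)
      rcases Metric.mem_nhds_iff.mp hmem with ⟨δ, hδ, hsub⟩
      exact ⟨δ, hδ, fun t ht => hsub ht⟩
    set c : ℝ := max 0 (s - δ / 2) with hc
    have hc0 : 0 ≤ c := le_max_left _ _
    have hcs : c < s := max_lt hs0T.1 (by linarith)
    have hmid : 0 < ∫ t in c..s, h t := by
      apply intervalIntegral.intervalIntegral_pos_of_pos_on
        (hch.intervalIntegrable c s) _ hcs
      intro t ht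
      apply hball
      have h1 : s - δ / 2 ≤ c := le_max_right _ _
      rw [Real.dist_eq, abs_of_nonpos (by linarith [ht.2])]
      linarith [ht.1, ht.2]
    have hleft : 0 ≤ ∫ t in (0:ℝ)..c, h t :=
      intervalIntegral.integral_nonneg hc0 (fun t _ => hhnn t)
    have hright : 0 ≤ ∫ t in s..T, h t :=
      intervalIntegral.integral_nonneg hs0T.2 (fun t _ => hhnn t)
    have heq : (∫ t in (0:ℝ)..T, h t) =
        (∫ t in (0:ℝ)..c, h t) + (∫ t in c..s, h t) + (∫ t in s..T, h t) := by
      rw [intervalIntegral.integral_add_adjacent_intervals (hch.intervalIntegrable 0 c)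
        (hch.intervalIntegrable c s),
        intervalIntegral.integral_add_adjacent_intervals (hch.intervalIntegrable 0 s)
        (hch.intervalIntegrable s T)]
    rw [heq]
    linarith
  linarith
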